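/- Let π* be a symmetric Nash equilibrium of the preference game J(π₁,π₂) = π₁ᵀAπ₂ − 1/2 with supp(π*) = supp(π_sft). Consider the sequence π¹ = π_sft and π^{t+1} defined as the symmetric Nash equilibrium of the τ-KL-regularized game with reference π^t (i.e., π^{t+1} = Prox(π^t, (1/τ)·A π^{t+1})). Then Σ_{t=1}^∞ KL(π^{t+1}‖π^t) ≤ KL(π*‖π_sft) < ∞. -/

import Mathlib

open Finset

section comal_aux

open Filter Topology

lemma comal_aux_key {x y : ℝ} (hx : 0 ≤ x) (hy : 0 < y) : x - y ≤ x * Real.log (x / y) := by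
  rcases hx.eq_or_lt with h | h
  · simp [← h]; linarith
  · have h1 : Real.log (y / x) ≤ y / x - 1 := Real.log_le_sub_one_of_pos (div_pos hy h)
    have h2 : Real.log (y / x) = -Real.log (x / y) := by
      rw [Real.log_div (ne_of_gt hy) (ne_of_gt h), Real.log_div (ne_of_gt h) (ne_of_gt hy)]
      ring
    rw [h2] at h1
    have h3 : x * (-Real.log (x / y)) ≤ x * (y / x - 1) :=
      mul_le_mul_of_nonneg_left h1 h.le
    have h4 : x * (y / x - 1) = y - x := by field_simp
    nlinarith

lemma comal_aux_grad {a b r : ℝ} (ha : 0 ≤ a) (hb : 0 < b) (hr : 0 < r) :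
    b * Real.log (b / r) + (Real.log (b / r) + 1) * (a - b) ≤ a * Real.log (a / r) := by
  have key : a - b ≤ a * (Real.log (a / r) - Real.log (b / r)) := by
    rcases ha.eq_or_lt with h | h
    · simp [← h]; linarith
    · have : Real.log (a / r) - Real.log (b / r) = Real.log (a / b) := by
        rw [Real.log_div (ne_of_gt h) (ne_of_gt hr), Real.log_div (ne_of_gt hb) (ne_of_gt hr),
          Real.log_div (ne_of_gt h) (ne_of_gt hb)]
        ring
      rw [this]
      exact comal_aux_key ha hb
  nlinarith

lemma comal_aux_nonneg {n : ℕ} (a b : Fin n → ℝ) (ha : ∀ y, 0 ≤ a y) (hb : ∀ y, 0 ≤ b y)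
    (hab : ∀ y, b y = 0 → a y = 0) (hsa : ∑ y, a y = 1) (hsb : ∑ y, b y = 1) :
    0 ≤ ∑ y, a y * Real.log (a y / b y) := by
  have h : ∑ y, (a y - b y) ≤ ∑ y, a y * Real.log (a y / b y) := by
    apply Finset.sum_le_sum
    intro y _
    rcases (hb y).eq_or_lt with h | h
    · simp [← h, hab y h.symm]
    · exact comal_aux_key (ha y) h
  have h0 : ∑ y, (a y - b y) = 0 := by
    rw [Finset.sum_sub_distrib, hsa, hsb]; ring
  linarith

lemma comal_step_main {n : ℕ} (c r q p : Fin n → ℝ) (T : Fin n → Prop) [DecidablePred T]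
    (hrpos : ∀ y, T y → 0 < r y)
    (hppos : ∀ y, T y → 0 < p y) (hp0 : ∀ y, ¬T y → p y = 0)
    (hqnn : ∀ y, 0 ≤ q y) (hq0 : ∀ y, ¬T y → q y = 0)
    (hqsum : ∑ y, q y = 1) (hpsum : ∑ y, p y = 1)
    (hL : ∑ y, c y * q y ≤ ∑ y, c y * p y)
    (hopt : ∀ ε : ℝ, 0 < ε → ε ≤ 1 →
      (∑ y, c y * ((1-ε)*q y + ε*p y))
        - ∑ y, ((1-ε)*q y + ε*p y) * Real.log (((1-ε)*q y + ε*p y) / r y)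
      ≤ (∑ y, c y * q y) - ∑ y, q y * Real.log (q y / r y)) :
    (∀ y, T y → 0 < q y) ∧
    (∑ y, p y * Real.log (p y / q y)) + (∑ y, q y * Real.log (q y / r y))
      ≤ ∑ y, p y * Real.log (p y / r y) := by
  classical
  set L : ℝ := (∑ y, c y * p y) - (∑ y, c y * q y) with hLdef
  have hLnn : 0 ≤ L := by rw [hLdef]; linarith
  have hsplit : ∀ ε : ℝ, (∑ y, c y * ((1-ε)*q y + ε*p y))
      = (∑ y, c y * q y) + ε * L := by
    intro ε
    rw [hLdef, mul_sub, Finset.mul_sum, Finset.mul_sum, ← Finset.sum_sub_distrib,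
      ← Finset.sum_add_distrib]
    exact Finset.sum_congr rfl fun y _ => by ring
  have h1 : ∀ ε : ℝ, 0 < ε → ε ≤ 1 →
      ε * L ≤ (∑ y, ((1-ε)*q y + ε*p y) * Real.log (((1-ε)*q y + ε*p y) / r y))
        - ∑ y, q y * Real.log (q y / r y) := by
    intro ε hε hε1
    have h := hopt ε hε hε1
    rw [hsplit ε] at h
    linarith
  -- Part 1: positivity
  have hqpos : ∀ y, T y → 0 < q y := by
    by_contra hcon
    push_neg at hcon
    obtain ⟨y0, hy0T, hy0⟩ := hcon
    have hq0y : q y0 = 0 := le_antisymm hy0 (hqnn y0)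
    set C : ℝ := (∑ y, p y * Real.log (p y / r y)) - (∑ y, q y * Real.log (q y / r y)) with hCdef
    set P0 : ℝ := ∑ y ∈ Finset.univ.filter (fun y => q y = 0), p y with hP0def
    have hP0pos : 0 < P0 := by
      have hmem : y0 ∈ Finset.univ.filter (fun y => q y = 0) := by
        simp [hq0y]
      have hle : p y0 ≤ P0 := by
        apply Finset.single_le_sum (fun y _ => ?_) hmem
        by_cases hT : T y
        · exact (hppos y hT).le
        · rw [hp0 y hT]
      exact lt_of_lt_of_le (hppos y0 hy0T) hle
    have hεbound : ∀ ε : ℝ, 0 < ε → ε < 1 →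
        (∑ y, ((1-ε)*q y + ε*p y) * Real.log (((1-ε)*q y + ε*p y) / r y))
          - (∑ y, q y * Real.log (q y / r y))
        ≤ ε * C + ε * Real.log ε * P0 := by
      intro ε hε hε1
      have hrhs : ε * C + ε * Real.log ε * P0
          = ∑ y, (ε * (p y * Real.log (p y / r y) - q y * Real.log (q y / r y))
              + ε * Real.log ε * (if q y = 0 then p y else 0)) := by
        rw [hCdef, hP0def, Finset.sum_filter, Finset.sum_add_distrib, ← Finset.mul_sum,
          ← Finset.mul_sum, ← Finset.sum_sub_distrib]
      rw [hrhs, ← Finset.sum_sub_distrib]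
      apply Finset.sum_le_sum
      intro y _
      by_cases hT : T y
      · by_cases hq : q y = 0
        · rw [if_pos hq, hq]
          have hpy := hppos y hT
          have hry := hrpos y hT
          have hdiv : ((1-ε)*0 + ε * p y) / r y = ε * (p y / r y) := by ring
          rw [hdiv, Real.log_mul (ne_of_gt hε) (ne_of_gt (div_pos hpy hry))]
          ring_nf
          exact le_refl _
        · rw [if_neg hq]
          have hqy : 0 < q y := lt_of_le_of_ne (hqnn y) (Ne.symm hq)
          have hpy := hppos y hT
          have hry := hrpos y hT
          have hb : 0 < (1-ε)*q y + ε*p y := by nlinarith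
          have g1 := comal_aux_grad (a := q y) (b := (1-ε)*q y + ε*p y) (r := r y) (hqnn y) hb hry
          have g2 := comal_aux_grad (a := p y) (b := (1-ε)*q y + ε*p y) (r := r y) hpy.le hb hry
          have g1' := mul_le_mul_of_nonneg_left g1 (show (0:ℝ) ≤ 1 - ε by linarith)
          have g2' := mul_le_mul_of_nonneg_left g2 hε.le
          nlinarith [g1', g2']
      · have hqy := hq0 y hT
        have hpy := hp0 y hT
        simp [hqy, hpy]
    set ε0 : ℝ := min (1/2) (Real.exp ((L - C) / P0 - 1)) with hε0def
    have hε0pos : 0 < ε0 := lt_min (by norm_num) (Real.exp_pos _)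
    have hε0half : ε0 ≤ 1/2 := min_le_left _ _
    have hε0lt : ε0 < 1 := lt_of_le_of_lt hε0half (by norm_num)
    have hlog : Real.log ε0 ≤ (L - C) / P0 - 1 := by
      calc Real.log ε0 ≤ Real.log (Real.exp ((L - C) / P0 - 1)) :=
            Real.log_le_log hε0pos (min_le_right _ _)
        _ = (L - C) / P0 - 1 := Real.log_exp _
    have hA := h1 ε0 hε0pos hε0lt.le
    have hB := hεbound ε0 hε0pos hε0lt
    have hcomb : ε0 * L ≤ ε0 * C + ε0 * Real.log ε0 * P0 := le_trans hA hB
    have hdiv : L ≤ C + Real.log ε0 * P0 := by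
      have := (mul_le_mul_iff_right₀ hε0pos).mp (by linarith [hcomb] :
        ε0 * L ≤ ε0 * (C + Real.log ε0 * P0))
      exact this
    have hfin : Real.log ε0 * P0 ≤ ((L - C) / P0 - 1) * P0 :=
      mul_le_mul_of_nonneg_right hlog hP0pos.le
    have hx : ((L - C) / P0 - 1) * P0 = (L - C) / P0 * P0 - P0 := by ring
    have hy : (L - C) / P0 * P0 = L - C := div_mul_cancel₀ _ (ne_of_gt hP0pos)
    clear_value L C P0 ε0
    linarith [hdiv, hfin, hx, hy, hP0pos]
  refine ⟨hqpos, ?_⟩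
  -- Part 2
  have h2 : ∀ ε : ℝ, 0 < ε → ε < 1 →
      L ≤ ∑ y, (p y - q y) * (Real.log (((1-ε)*q y + ε*p y) / r y) + 1) := by
    intro ε hε hε1
    have h1' := h1 ε hε hε1.le
    have hb : (∑ y, ((1-ε)*q y + ε*p y) * Real.log (((1-ε)*q y + ε*p y) / r y))
        - (∑ y, q y * Real.log (q y / r y))
        ≤ ε * ∑ y, (p y - q y) * (Real.log (((1-ε)*q y + ε*p y) / r y) + 1) := by
      rw [Finset.mul_sum, ← Finset.sum_sub_distrib]
      apply Finset.sum_le_sum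
      intro y _
      by_cases hT : T y
      · have hqy := hqpos y hT
        have hpy := hppos y hT
        have hry := hrpos y hT
        have hB : 0 < (1-ε)*q y + ε*p y := by nlinarith
        have g := comal_aux_grad (a := q y) (b := (1-ε)*q y + ε*p y) (r := r y) (hqnn y) hB hry
        nlinarith [g]
      · simp [hq0 y hT, hp0 y hT]
    have hcomb := le_trans h1' hb
    exact (mul_le_mul_iff_right₀ hε).mp hcomb
  have hlim : Tendsto (fun ε : ℝ => ∑ y, (p y - q y) * (Real.log (((1-ε)*q y + ε*p y) / r y) + 1))
      (𝓝[>] (0:ℝ)) (𝓝 (∑ y, (p y - q y) * (Real.log (q y / r y) + 1))) := by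
    apply tendsto_finset_sum
    intro y _
    by_cases hT : T y
    · have hcont : ContinuousAt (fun ε : ℝ => (p y - q y) * (Real.log (((1-ε)*q y + ε*p y) / r y) + 1)) 0 := by
        have hf : ContinuousAt (fun ε : ℝ => ((1-ε)*q y + ε*p y) / r y) 0 := by fun_prop
        have h0 : ((1-(0:ℝ))*q y + 0*p y) / r y ≠ 0 := by
          have := div_pos (hqpos y hT) (hrpos y hT)
          simpa using ne_of_gt this
        exact continuousAt_const.mul ((hf.log h0).add continuousAt_const)
      have ht := (hcont.continuousWithinAt (s := Set.Ioi (0:ℝ))).tendsto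
      simpa using ht
    · have hpq : p y - q y = 0 := by rw [hp0 y hT, hq0 y hT]; ring
      simp only [hpq, zero_mul]
      exact tendsto_const_nhds
  have hle : L ≤ ∑ y, (p y - q y) * (Real.log (q y / r y) + 1) := by
    refine ge_of_tendsto hlim ?_
    filter_upwards [Ioo_mem_nhdsGT_of_mem (Set.mem_Ico.mpr ⟨le_refl (0:ℝ), zero_lt_one⟩)] with ε hε
    exact h2 ε hε.1 hε.2
  have hexp : ∑ y, (p y - q y) * (Real.log (q y / r y) + 1)
      = (∑ y, p y * Real.log (p y / r y)) - (∑ y, p y * Real.log (p y / q y))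
        - (∑ y, q y * Real.log (q y / r y)) + ∑ y, (p y - q y) := by
    rw [← Finset.sum_sub_distrib, ← Finset.sum_sub_distrib, ← Finset.sum_add_distrib]
    apply Finset.sum_congr rfl
    intro y _
    by_cases hT : T y
    · have hqy := hqpos y hT
      have hpy := hppos y hT
      have hry := hrpos y hT
      rw [Real.log_div (ne_of_gt hpy) (ne_of_gt hry), Real.log_div (ne_of_gt hpy) (ne_of_gt hqy),
        Real.log_div (ne_of_gt hqy) (ne_of_gt hry)]
      ring
    · simp [hp0 y hT, hq0 y hT]
  have hsum0 : ∑ y, (p y - q y) = 0 := by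
    rw [Finset.sum_sub_distrib, hpsum, hqsum]; ring
  rw [hexp, hsum0] at hle
  linarith

end comal_aux

/-- bounded path length of COMAL. With `π⁰ = π_sft` and each
`π^{t+1}` the symmetric Nash equilibrium of the `τ`-KL-regularized game with
reference `π^t` (equivalently `π^{t+1} = Prox(π^t, (1/τ)·Aπ^{t+1})`), and `π*`
a symmetric Nash equilibrium of `J` with `supp(π*) = supp(π_sft)`, the total
path length satisfies `Σ_t KL(π^{t+1}‖π^t) ≤ KL(π*‖π_sft) < ∞`. -/
theorem comal_bounded_path_length {n : ℕ}
    (A : Fin n → Fin n → ℝ)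
    (hA01 : ∀ i j, A i j ∈ Set.Icc (0:ℝ) 1)
    (hApref : ∀ i j, A i j + A j i = 1)
    (KL : (Fin n → ℝ) → (Fin n → ℝ) → ℝ)
    (hKL : ∀ p q, KL p q = ∑ y, p y * Real.log (p y / q y))
    (τ : ℝ) (hτ : 0 < τ)
    (πsft : Fin n → ℝ) (hπsft : πsft ∈ stdSimplex ℝ (Fin n))
    (πstar : Fin n → ℝ) (hπstar : πstar ∈ stdSimplex ℝ (Fin n))
    (hsupp : ∀ y, πstar y ≠ 0 ↔ πsft y ≠ 0)
    (hNash : ∀ π ∈ stdSimplex ℝ (Fin n), ∑ i, ∑ j, π i * A i j * πstar j ≤ 1/2)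
    (π : ℕ → Fin n → ℝ)
    (hπmem : ∀ t, π t ∈ stdSimplex ℝ (Fin n))
    (hπsupp : ∀ t y, π t y ≠ 0 → πsft y ≠ 0)
    (hinit : π 0 = πsft)
    -- π^{t+1} = Prox(π^t, (1/τ)·Aπ^{t+1})
    (hfix : ∀ t, ∀ p ∈ stdSimplex ℝ (Fin n),
      (∑ y, (1/τ) * (∑ j, A y j * π (t+1) j) * p y) - KL p (π t)
        ≤ (∑ y, (1/τ) * (∑ j, A y j * π (t+1) j) * π (t+1) y)
            - KL (π (t+1)) (π t)) :
    Summable (fun t => KL (π (t+1)) (π t)) ∧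
    ∑' t, KL (π (t+1)) (π t) ≤ KL πstar πsft := by
  classical
  have hstep : ∀ t, (∀ y, πsft y ≠ 0 → 0 < π t y) →
      ((∀ y, πsft y ≠ 0 → 0 < π (t+1) y) ∧
        (∑ y, πstar y * Real.log (πstar y / π (t+1) y))
          + (∑ y, π (t+1) y * Real.log (π (t+1) y / π t y))
          ≤ ∑ y, πstar y * Real.log (πstar y / π t y)) := by
    intro t hrpos
    have hq1 : ∑ y, π (t+1) y = 1 := (hπmem (t+1)).2
    have hp1 : ∑ y, πstar y = 1 := hπstar.2
    refine comal_step_main (fun y => 1/τ * (∑ j, A y j * π (t+1) j))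
      (π t) (π (t+1)) πstar (fun y => πsft y ≠ 0)
      hrpos
      (fun y hT => lt_of_le_of_ne (hπstar.1 y) (Ne.symm ((hsupp y).mpr hT)))
      (fun y hT => by by_contra h; exact hT ((hsupp y).mp h))
      (fun y => (hπmem (t+1)).1 y)
      (fun y hT => by by_contra h; exact hT (hπsupp (t+1) y h))
      hq1 hp1 ?_ ?_
    · -- hL : game value comparison
      have e1 : ∑ y, (1/τ * (∑ j, A y j * π (t+1) j)) * π (t+1) y
          = (1/τ) * ∑ y, ∑ j, A y j * π (t+1) j * π (t+1) y := by
        rw [Finset.mul_sum]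
        refine Finset.sum_congr rfl fun y _ => ?_
        rw [mul_assoc, Finset.sum_mul]
      have e2 : ∑ y, (1/τ * (∑ j, A y j * π (t+1) j)) * πstar y
          = (1/τ) * ∑ y, ∑ j, A y j * π (t+1) j * πstar y := by
        rw [Finset.mul_sum]
        refine Finset.sum_congr rfl fun y _ => ?_
        rw [mul_assoc, Finset.sum_mul]
      have hX : ∑ y, ∑ j, A y j * π (t+1) j * π (t+1) y = 1/2 := by
        have hdouble : (∑ y, ∑ j, A y j * π (t+1) j * π (t+1) y)
            + (∑ y, ∑ j, A y j * π (t+1) j * π (t+1) y) = 1 := by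
          have hswap : (∑ y, ∑ j, A y j * π (t+1) j * π (t+1) y)
              = ∑ y, ∑ j, A j y * π (t+1) y * π (t+1) j := Finset.sum_comm
          nth_rewrite 2 [hswap]
          rw [← Finset.sum_add_distrib]
          have : ∀ y, (∑ j, A y j * π (t+1) j * π (t+1) y)
              + (∑ j, A j y * π (t+1) y * π (t+1) j) = ∑ j, π (t+1) y * π (t+1) j := by
            intro y
            rw [← Finset.sum_add_distrib]
            exact Finset.sum_congr rfl fun j _ => by
              linear_combination π (t+1) y * π (t+1) j * hApref y j
          rw [Finset.sum_congr rfl fun y _ => this y]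
          have : ∑ y, ∑ j, π (t+1) y * π (t+1) j = (∑ y, π (t+1) y) * (∑ j, π (t+1) j) := by
            rw [Finset.sum_mul_sum]
          rw [this, hq1, one_mul]
        linarith
      have hW : 1/2 ≤ ∑ y, ∑ j, A y j * π (t+1) j * πstar y := by
        have hN := hNash (π (t+1)) (hπmem (t+1))
        have hid : (∑ y, ∑ j, A y j * π (t+1) j * πstar y)
            + (∑ i, ∑ j, π (t+1) i * A i j * πstar j) = 1 := by
          have hswap : (∑ i, ∑ j, π (t+1) i * A i j * πstar j)
              = ∑ y, ∑ j, π (t+1) j * A j y * πstar y := Finset.sum_comm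
          rw [hswap, ← Finset.sum_add_distrib]
          have : ∀ y, (∑ j, A y j * π (t+1) j * πstar y)
              + (∑ j, π (t+1) j * A j y * πstar y) = ∑ j, π (t+1) j * πstar y := by
            intro y
            rw [← Finset.sum_add_distrib]
            exact Finset.sum_congr rfl fun j _ => by
              linear_combination π (t+1) j * πstar y * hApref y j
          rw [Finset.sum_congr rfl fun y _ => this y]
          have : ∑ y, ∑ j, π (t+1) j * πstar y = (∑ j, π (t+1) j) * (∑ y, πstar y) := by
            rw [Finset.sum_mul_sum]
            exact Finset.sum_comm
          rw [this, hq1, hp1, one_mul]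
        linarith
      rw [e1, e2, hX]
      have hτinv : 0 ≤ 1/τ := by positivity
      exact mul_le_mul_of_nonneg_left hW hτinv
    · -- hopt
      intro ε hε hε1
      have hmem : (fun y => (1-ε) * π (t+1) y + ε * πstar y) ∈ stdSimplex ℝ (Fin n) := by
        constructor
        · intro y
          have h1 := (hπmem (t+1)).1 y
          have h2 := hπstar.1 y
          have : (0:ℝ) ≤ 1 - ε := by linarith
          positivity
        · rw [Finset.sum_add_distrib, ← Finset.mul_sum, ← Finset.mul_sum, hq1, hp1]
          ring
      have h := hfix t _ hmem
      rw [hKL, hKL] at h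
      exact h
  have hInv : ∀ t, ∀ y, πsft y ≠ 0 → 0 < π t y := by
    intro t
    induction t with
    | zero => exact fun y hy => hinit ▸ lt_of_le_of_ne (hπsft.1 y) (Ne.symm hy)
    | succ t ih => exact (hstep t ih).1
  have hdec : ∀ t, (∑ y, πstar y * Real.log (πstar y / π (t+1) y))
      + (∑ y, π (t+1) y * Real.log (π (t+1) y / π t y))
      ≤ ∑ y, πstar y * Real.log (πstar y / π t y) := fun t => (hstep t (hInv t)).2
  set a : ℕ → ℝ := fun t => ∑ y, π (t+1) y * Real.log (π (t+1) y / π t y) with hadef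
  set b : ℕ → ℝ := fun t => ∑ y, πstar y * Real.log (πstar y / π t y) with hbdef
  have ha : ∀ t, 0 ≤ a t := by
    intro t
    apply comal_aux_nonneg _ _ ((hπmem (t+1)).1) ((hπmem t).1) _ (hπmem (t+1)).2 (hπmem t).2
    intro y hy
    by_contra h
    have hT : πsft y ≠ 0 := hπsupp (t+1) y h
    exact (ne_of_gt (hInv t y hT)) hy
  have hb : ∀ t, 0 ≤ b t := by
    intro t
    apply comal_aux_nonneg _ _ (hπstar.1) ((hπmem t).1) _ hπstar.2 (hπmem t).2
    intro y hy
    by_contra h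
    have hT : πsft y ≠ 0 := (hsupp y).mp h
    exact (ne_of_gt (hInv t y hT)) hy
  have htel : ∀ N, (∑ t ∈ Finset.range N, a t) + b N ≤ b 0 := by
    intro N
    induction N with
    | zero => simp
    | succ N ih =>
      rw [Finset.sum_range_succ]
      have := hdec N
      have h2 : a N + b (N+1) ≤ b N := by
        simp only [hadef, hbdef]
        linarith [this]
      linarith
  have hbound : ∀ N, (∑ t ∈ Finset.range N, a t) ≤ b 0 := fun N => by
    linarith [htel N, hb N]
  have hb0 : b 0 = KL πstar πsft := by
    simp only [hbdef]
    rw [hinit, hKL]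
  have hKLa : (fun t => KL (π (t+1)) (π t)) = a := by
    funext t
    simp only [hadef]
    rw [hKL]
  rw [hKLa, ← hb0]
  exact ⟨summable_of_sum_range_le ha hbound, Real.tsum_le_of_sum_range_le ha hbound⟩
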